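/- Let I be a square-free monomial ideal of R = k[x_1,...,x_d] with I^{(n)} = Q_1^n ∩ ... ∩ Q_s^n for minimal primes Q_j. Suppose that for some fixed integer m ≥ 2 and every n ≥ 0, the projection Φ_m satisfies Φ_m((I^{nm+1})^{1/m}) ⊆ I^{n+1}. Then I^n = I^{(n)} for every positive integer n. -/

import Mathlib

open MvPolynomial

/-- The projection `Φ_m : R^{1/m} → R` under the identification `R^{1/m} ≅ R`
(`x_i^{1/m} ↦ x_i`, so that an ideal `J^{1/m}` of `R^{1/m}` is identified with the
monomial ideal `J` itself): `Φ_m` sends the monomial `x^a` to `x^{a/m}` if `m` divides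
every coordinate of `a`, and to `0` otherwise. -/
noncomputable def Phi (k : Type*) [Field k] (d m : ℕ) :
    MvPolynomial (Fin d) k → MvPolynomial (Fin d) k :=
  fun p => ∑ a ∈ p.support,
    if ∀ i, m ∣ a i then
      monomial (Finsupp.mapRange (· / m) (Nat.zero_div m) a) (coeff a p)
    else 0

section Aux

variable {k : Type*} [Field k] {d : ℕ}

lemma phi_monomial (m : ℕ) (hm : m ≠ 0) (c : Fin d →₀ ℕ) :
    Phi k d m (monomial (m • c) (1 : k)) = monomial c 1 := by
  classical
  unfold Phi
  rw [support_monomial, if_neg (one_ne_zero (α := k)), Finset.sum_singleton, if_pos]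
  · have h1 : Finsupp.mapRange (· / m) (Nat.zero_div m) (m • c) = c := by
      ext i
      rw [Finsupp.mapRange_apply, Finsupp.smul_apply, smul_eq_mul,
        Nat.mul_div_cancel_left _ (Nat.pos_of_ne_zero hm)]
    rw [h1, coeff_monomial, if_pos rfl]
  · intro i
    rw [Finsupp.smul_apply, smul_eq_mul]
    exact dvd_mul_right _ _

/-- The ideal of polynomials all of whose monomials have `F`-degree at least `n`. -/
def degIdeal (F : Finset (Fin d)) (n : ℕ) : Ideal (MvPolynomial (Fin d) k) where
  carrier := {f | ∀ a ∈ f.support, n ≤ ∑ i ∈ F, a i}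
  zero_mem' := by simp
  add_mem' := by
    intro f g hf hg a ha
    rcases Finset.mem_union.mp (MvPolynomial.support_add ha) with h | h
    · exact hf a h
    · exact hg a h
  smul_mem' := by
    intro c f hf a ha
    rw [smul_eq_mul] at ha
    obtain ⟨u, hu, v, hv, rfl⟩ := Finset.mem_add.mp (MvPolynomial.support_mul _ _ ha)
    have := hf v hv
    have hsum : ∑ i ∈ F, (u + v) i = ∑ i ∈ F, u i + ∑ i ∈ F, v i := by
      rw [← Finset.sum_add_distrib]
      rfl
    omega

lemma span_pow_le_degIdeal (F : Finset (Fin d)) (n : ℕ) :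
    (Ideal.span (X '' (F : Set (Fin d))) : Ideal (MvPolynomial (Fin d) k)) ^ n
      ≤ degIdeal F n := by
  induction n with
  | zero =>
    intro f _
    exact fun a _ => Nat.zero_le _
  | succ n ih =>
    rw [pow_succ]
    rw [Ideal.mul_le]
    intro r hr t ht
    intro a ha
    obtain ⟨u, hu, v, hv, rfl⟩ := Finset.mem_add.mp (MvPolynomial.support_mul _ _ ha)
    have h1 : n ≤ ∑ i ∈ F, u i := ih hr u hu
    have h2 : 1 ≤ ∑ i ∈ F, v i := by
      have hle : Ideal.span (X '' (F : Set (Fin d))) ≤ (degIdeal F 1 : Ideal (MvPolynomial (Fin d) k)) := by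
        rw [Ideal.span_le]
        rintro _ ⟨i, hi, rfl⟩
        intro b hb
        rw [MvPolynomial.support_X, Finset.mem_singleton] at hb
        subst hb
        have : ∑ i' ∈ F, (Finsupp.single i 1) i' = 1 := by
          simp only [Finsupp.single_apply]
          rw [Finset.sum_ite_eq F i (fun _ => 1), if_pos (by exact_mod_cast hi)]
        omega
      exact hle ht v hv
    have hsum : ∑ i ∈ F, (u + v) i = ∑ i ∈ F, u i + ∑ i ∈ F, v i := by
      rw [← Finset.sum_add_distrib]; rfl
    omega


lemma prod_monomial_one {ι : Type*} (S : Finset ι) (g : ι → (Fin d →₀ ℕ)) :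
    (∏ i ∈ S, (monomial (g i) (1 : k))) = monomial (∑ i ∈ S, g i) 1 := by
  classical
  induction S using Finset.induction with
  | empty => simp [monomial_eq (s := 0)]
  | insert _ _ hnotmem ih =>
    rw [Finset.prod_insert hnotmem, Finset.sum_insert hnotmem, ih, monomial_mul, one_mul]

lemma prod_mem_pow {R : Type*} [CommRing R] (K : Ideal R) (t : ℕ) {ι : Type*}
    (S : Finset ι) (f : ι → R) (h : ∀ i ∈ S, f i ∈ K ^ t) :
    (∏ i ∈ S, f i) ∈ K ^ (S.card * t) := by
  classical
  induction S using Finset.induction with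
  | empty => simp [Ideal.one_eq_top]
  | @insert a S hnotmem ih =>
    rw [Finset.prod_insert hnotmem, Finset.card_insert_of_notMem hnotmem, add_mul, one_mul,
      add_comm, pow_add]
    exact Ideal.mul_mem_mul (h a (Finset.mem_insert_self a S))
      (ih (fun i hi => h i (Finset.mem_insert_of_mem hi)))

end Aux

/-- let `I` be a square-free monomial ideal with minimal primes
`Q_1,…,Q_s` and symbolic powers `I^{(n)} = ⋂_j Q_j^n`. If for some fixed `m ≥ 2` and
every `n ≥ 0` one has `Φ_m((I^{nm+1})^{1/m}) ⊆ I^{n+1}`, then `I^n = I^{(n)}` for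
every positive integer `n`. -/
theorem ordinary_eq_symbolic_of_Phi (k : Type*) [Field k] (d s : ℕ)
    (F : Fin s → Finset (Fin d))
    (Q : Fin s → Ideal (MvPolynomial (Fin d) k))
    (hQ : ∀ j, Q j = Ideal.span (X '' (F j : Set (Fin d))))
    (I : Ideal (MvPolynomial (Fin d) k)) (hI : I = ⨅ j, Q j)
    (hmin : I.minimalPrimes = Set.range Q)
    (m : ℕ) (hm : 2 ≤ m)
    (hPhi : ∀ n : ℕ, ∀ f ∈ I ^ (n * m + 1), Phi k d m f ∈ I ^ (n + 1)) :
    ∀ n : ℕ, 1 ≤ n → I ^ n = ⨅ j, Q j ^ n := by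
  classical
  have hm0 : m ≠ 0 := by omega
  have C2 : ∀ (c : Fin d →₀ ℕ) (N : ℕ),
      (monomial (m • c) (1:k)) ∈ I ^ (N * m + 1) → (monomial c (1:k)) ∈ I ^ (N + 1) := by
    intro c N h
    have h2 := hPhi N _ h
    rwa [phi_monomial m hm0 c] at h2
  have down : ∀ (e : ℕ) (c : Fin d →₀ ℕ) (n : ℕ),
      monomial ((m ^ e) • c) (1:k) ∈ I ^ (m ^ e * n + 1) → monomial c (1:k) ∈ I ^ (n + 1) := by
    intro e
    induction e with
    | zero => intro c n h; simpa using h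
    | succ e ih =>
      intro c n h
      apply ih c n
      apply C2 (m ^ e • c) (m ^ e * n)
      have h1 : (m : ℕ) ^ (e + 1) • c = m • (m ^ e • c) := by
        rw [← mul_smul, ← pow_succ']
      have h2 : m ^ (e + 1) * n + 1 = m ^ e * n * m + 1 := by
        rw [pow_succ, mul_right_comm]
      rw [h1, h2] at h
      exact h
  have descend : ∀ (a : Fin d →₀ ℕ) (n σ : ℕ), 1 ≤ σ →
      monomial a (1:k) ∈ I ^ n → monomial (σ • a) (1:k) ∈ I ^ (σ * n + 1) →
      monomial a (1:k) ∈ I ^ (n + 1) := by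
    intro a n σ hσ ha hσa
    have hkpow : σ ≤ m ^ σ := le_of_lt (Nat.lt_pow_self (by omega : 1 < m) : σ < m ^ σ)
    apply down σ a n
    have hsplit : (m ^ σ) • a = σ • a + (m ^ σ - σ) • a := by
      rw [← add_smul, Nat.add_sub_cancel' hkpow]
    have h2 : monomial ((m ^ σ - σ) • a) (1:k) ∈ I ^ ((m ^ σ - σ) * n) := by
      have h3 := Ideal.pow_mem_pow ha (m ^ σ - σ)
      rw [monomial_pow, one_pow, ← pow_mul, mul_comm n] at h3
      exact h3
    have hmul := Ideal.mul_mem_mul hσa h2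
    rw [← pow_add, monomial_mul, one_mul] at hmul
    have hexp : σ * n + 1 + (m ^ σ - σ) * n = m ^ σ * n + 1 := by
      have h4 : (m ^ σ - σ) * n = m ^ σ * n - σ * n := Nat.sub_mul _ _ _
      have h5 : σ * n ≤ m ^ σ * n := Nat.mul_le_mul_right _ hkpow
      omega
    rw [hsplit, ← hexp]
    exact hmul
  have M : ∀ n : ℕ, ∀ a : Fin d →₀ ℕ,
      (∀ j, n ≤ ∑ i ∈ F j, a i) → monomial a (1:k) ∈ I ^ n := by
    intro n
    induction n with
    | zero => intro a _; rw [pow_zero, Ideal.one_eq_top]; trivial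
    | succ n ih =>
      intro a ha
      rcases isEmpty_or_nonempty (Fin s) with hs | hs
      · haveI := hs
        have hItop : I = ⊤ := by rw [hI]; exact iInf_of_empty Q
        rw [hItop, Ideal.top_pow]
        trivial
      · obtain ⟨j0⟩ := hs
        set S := a.support with hSdef
        have hSne : S.Nonempty := by
          have h1 : (∑ i ∈ F j0, a i) ≠ 0 := by have := ha j0; omega
          obtain ⟨i, hi, hne⟩ := Finset.exists_ne_zero_of_sum_ne_zero h1
          exact ⟨i, Finsupp.mem_support_iff.mpr hne⟩
        have hσ : 1 ≤ S.card := Finset.card_pos.mpr hSne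
        have hsle : ∀ i ∈ S, Finsupp.single i 1 ≤ a := by
          intro i hi
          rw [Finsupp.single_le_iff]
          exact Nat.one_le_iff_ne_zero.mpr (Finsupp.mem_support_iff.mp hi)
        have hpiece : ∀ i ∈ S, monomial (a - Finsupp.single i 1) (1:k) ∈ I ^ n := by
          intro i hi
          apply ih
          intro j
          set b : Fin d →₀ ℕ := a - Finsupp.single i 1 with hb
          have hptw : ∀ i', b i' + (Finsupp.single i 1) i' = a i' := by
            intro i'
            have h6 : (Finsupp.single i 1) i' ≤ a i' := Finsupp.le_def.mp (hsle i hi) i'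
            rw [hb, Finsupp.tsub_apply]
            omega
          have hsum : ∑ i' ∈ F j, b i' + ∑ i' ∈ F j, (Finsupp.single i 1) i'
              = ∑ i' ∈ F j, a i' := by
            rw [← Finset.sum_add_distrib]
            exact Finset.sum_congr rfl (fun i' _ => hptw i')
          have hsing : ∑ i' ∈ F j, (Finsupp.single i (1:ℕ)) i' ≤ 1 := by
            simp only [Finsupp.single_apply]
            rw [Finset.sum_ite_eq (F j) i (fun _ => 1)]
            split <;> omega
          have := ha j
          omega
        set u : Fin d →₀ ℕ := ∑ i ∈ S, Finsupp.single i 1 with hudef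
        have hule : ∀ i ∈ S, Finsupp.single i 1 ≤ u := by
          intro i hi
          rw [Finsupp.single_le_iff]
          have : u i = 1 := by
            rw [hudef, Finset.sum_apply']
            simp only [Finsupp.single_apply]
            rw [Finset.sum_ite_eq' S i (fun _ => 1), if_pos hi]
          omega
        have hu : monomial u (1:k) ∈ I := by
          rw [hI, Submodule.mem_iInf]
          intro j
          have h1 : (∑ i ∈ F j, a i) ≠ 0 := by have := ha j; omega
          obtain ⟨i, hiF, hne⟩ := Finset.exists_ne_zero_of_sum_ne_zero h1
          have hiS : i ∈ S := Finsupp.mem_support_iff.mpr hne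
          have hX : (X i : MvPolynomial (Fin d) k) = monomial (Finsupp.single i 1) 1 := rfl
          have heq : monomial u (1:k) = X i * monomial (u - Finsupp.single i 1) 1 := by
            rw [hX, monomial_mul, one_mul, add_tsub_cancel_of_le (hule i hiS)]
          rw [heq]
          apply Ideal.mul_mem_right
          rw [hQ j]
          exact Ideal.subset_span ⟨i, hiF, rfl⟩
        have hbig : monomial (S.card • a) (1:k) ∈ I ^ (S.card * n + 1) := by
          have hprod := prod_mem_pow I n S (fun i => monomial (a - Finsupp.single i 1) (1:k)) hpiece
          have hmul := Ideal.mul_mem_mul hprod hu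
          rw [← pow_succ, prod_monomial_one, monomial_mul, one_mul] at hmul
          have hexp : (∑ i ∈ S, (a - Finsupp.single i 1)) + u = S.card • a := by
            rw [hudef, ← Finset.sum_add_distrib]
            have hc : ∀ i ∈ S, (a - Finsupp.single i 1) + Finsupp.single i 1 = a := fun i hi =>
              tsub_add_cancel_of_le (hsle i hi)
            rw [Finset.sum_congr rfl hc, Finset.sum_const]
          rwa [hexp] at hmul
        exact descend a n S.card hσ (ih a (fun j => by have := ha j; omega)) hbig
  intro n hn
  apply le_antisymm
  · apply le_iInf
    intro j
    have hle : I ≤ Q j := by rw [hI]; exact iInf_le Q j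
    exact Ideal.pow_right_mono hle n
  · intro f hf
    rw [MvPolynomial.as_sum f]
    apply Ideal.sum_mem
    intro v hv
    have h1 : monomial v (1:k) ∈ I ^ n := by
      apply M n v
      intro j
      have hfj : f ∈ Q j ^ n := (Submodule.mem_iInf _).mp hf j
      rw [hQ j] at hfj
      exact span_pow_le_degIdeal (F j) n hfj v hv
    have h2 : monomial v (coeff v f) = C (coeff v f) * monomial v 1 := by
      rw [C_mul_monomial, mul_one]
    rw [h2]
    exact Ideal.mul_mem_left _ _ h1
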